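/- Let (Z, ω) be a 2d-dimensional symplectic vector space, let V ⊆ Z be a subspace with dim V = d, and let W ⊆ Z be a Lagrangian subspace. Then dim(V ∩ W) = dim(V^ω ∩ W). (This is the rank version of the previous statement: in the symplectic groupoid setting it says that the restrictions of the source and target maps to a Lagrangian submanifold have tangent maps with kernels of equal dimension, hence one has constant rank if and only if the other does.) -/

import Mathlib

open Module

/-- The symplectic orthogonal complement of a subspace `U` with respect to a
bilinear form `ω`: all `z` with `ω u z = 0` for every `u ∈ U`. -/
def sympCompl {Z : Type*} [AddCommGroup Z] [Module ℝ Z]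
    (ω : Z →ₗ[ℝ] Z →ₗ[ℝ] ℝ) (U : Submodule ℝ Z) : Submodule ℝ Z where
  carrier := {z | ∀ u ∈ U, ω u z = 0}
  add_mem' := by
    intro a b ha hb u hu
    simp [map_add, ha u hu, hb u hu]
  zero_mem' := by
    intro u hu
    simp
  smul_mem' := by
    intro c a ha u hu
    simp [ha u hu]

lemma sympCompl_eq_orthogonal {Z : Type*} [AddCommGroup Z] [Module ℝ Z]
    (ω : LinearMap.BilinForm ℝ Z) (U : Submodule ℝ Z) :
    sympCompl ω U = ω.orthogonal U := rfl

lemma sympCompl_sup {Z : Type*} [AddCommGroup Z] [Module ℝ Z]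
    (ω : Z →ₗ[ℝ] Z →ₗ[ℝ] ℝ) (U V : Submodule ℝ Z) :
    sympCompl ω (U ⊔ V) = sympCompl ω U ⊓ sympCompl ω V := by
  ext z
  constructor
  · intro h
    exact ⟨fun u hu => h u (Submodule.mem_sup_left hu),
           fun v hv => h v (Submodule.mem_sup_right hv)⟩
  · rintro ⟨h1, h2⟩ u hu
    obtain ⟨x, hx, y, hy, rfl⟩ := Submodule.mem_sup.1 hu
    simp [h1 x hx, h2 y hy]

/-- In a `2d`-dimensional symplectic vector space, if `dim V = d` and `W` is
Lagrangian, then `dim (V ∩ W) = dim (V^ω ∩ W)`. -/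
theorem dim_inf_eq_dim_sympCompl_inf
    {Z : Type*} [AddCommGroup Z] [Module ℝ Z] [FiniteDimensional ℝ Z]
    (d : ℕ) (ω : Z →ₗ[ℝ] Z →ₗ[ℝ] ℝ)
    (halt : ∀ z, ω z z = 0)
    (hnondeg : ∀ z, (∀ z', ω z z' = 0) → z = 0)
    (hdim : finrank ℝ Z = 2 * d)
    (V W : Submodule ℝ Z)
    (hV : finrank ℝ V = d)
    (hW : sympCompl ω W = W) :
    finrank ℝ ↥(V ⊓ W) = finrank ℝ ↥(sympCompl ω V ⊓ W) := by
  have hrefl : (ω : LinearMap.BilinForm ℝ Z).IsRefl :=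
    LinearMap.IsAlt.isRefl halt
  have hnd : LinearMap.BilinForm.Nondegenerate ω :=
    hrefl.nondegenerate_iff_separatingLeft.mpr fun z hz => hnondeg z hz
  have hfo : ∀ U : Submodule ℝ Z,
      finrank ℝ (sympCompl ω U) = finrank ℝ Z - finrank ℝ U := fun U => by
    rw [sympCompl_eq_orthogonal]
    exact LinearMap.BilinForm.finrank_orthogonal hnd U
  -- dim W = d
  have hWd : finrank ℝ W = d := by
    have := hfo W
    rw [hW, hdim] at this
    have hle : finrank ℝ W ≤ 2 * d := hdim ▸ Submodule.finrank_le W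
    omega
  -- key computation
  have h1 : finrank ℝ ↥(V ⊔ W) + finrank ℝ ↥(V ⊓ W) = 2 * d := by
    rw [Submodule.finrank_sup_add_finrank_inf_eq, hV, hWd]; ring
  have h2 : finrank ℝ ↥(sympCompl ω (V ⊔ W)) = finrank ℝ Z - finrank ℝ ↥(V ⊔ W) := hfo _
  rw [sympCompl_sup, hW] at h2
  have hle2 : finrank ℝ ↥(V ⊔ W) ≤ 2 * d := hdim ▸ Submodule.finrank_le _
  rw [hdim] at h2
  omega
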